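/- For all real numbers a, b, c, the tensor R = a·Π + b·Φ + c·Ψ satisfies R.Π = 0. -/

import Mathlib

open scoped RealInnerProductSpace

noncomputable section

variable {V : Type*} [NormedAddCommGroup V] [InnerProductSpace ℝ V] [FiniteDimensional ℝ V]

/-- The orthogonal projection onto `D`, as a map `V → V`. -/
def projD (D : Submodule ℝ V) (X : V) : V := (D.orthogonalProjectionOnto X : V)

/-- The bilinear form `h(X,Y) = ⟪πX, πY⟫`. -/
def hForm (D : Submodule ℝ V) (X Y : V) : ℝ := ⟪projD D X, projD D Y⟫

/-- The 2-form `ω(X,Y) = h(JX, Y)`. -/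
def omForm (J : V →ₗ[ℝ] V) (D : Submodule ℝ V) (X Y : V) : ℝ := hForm D (J X) Y

/-- The standard Kähler curvature-type tensor `Π` of constant holomorphic sectional curvature. -/
def PiT (J : V →ₗ[ℝ] V) (U Vv W : V) : V :=
  (1/4 : ℝ) • (⟪Vv, W⟫ • U - ⟪U, W⟫ • Vv + ⟪J Vv, W⟫ • J U - ⟪J U, W⟫ • J Vv
    - (2 * ⟪J U, Vv⟫) • J W)

/-- The curvature-type tensor `Φ`. -/
def PhiT (J : V →ₗ[ℝ] V) (D : Submodule ℝ V) (U Vv W : V) : V :=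
  (1/8 : ℝ) • (⟪Vv, W⟫ • projD D U - ⟪U, W⟫ • projD D Vv
    + hForm D Vv W • U - hForm D U W • Vv
    + ⟪J Vv, W⟫ • projD D (J U) - ⟪J U, W⟫ • projD D (J Vv)
    + omForm J D Vv W • J U - omForm J D U W • J Vv
    - (2 * ⟪J U, Vv⟫) • projD D (J W) - (2 * omForm J D U Vv) • J W)

/-- The curvature-type tensor `Ψ(U,V)W = −ω(U,V)·J(πW)`. -/
def PsiT (J : V →ₗ[ℝ] V) (D : Submodule ℝ V) (U Vv W : V) : V :=
  -(omForm J D U Vv) • J (projD D W)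

/-- The derivation action of an endomorphism `A` on a bilinear form `T`. -/
def der2 (A : V → V) (T : V → V → ℝ) (X Y : V) : ℝ := -T (A X) Y - T X (A Y)

/-- The derivation action of an endomorphism `A` on a 4-multilinear form `T`. -/
def der4 (A : V → V) (T : V → V → V → V → ℝ) (X Y Z W : V) : ℝ :=
  -T (A X) Y Z W - T X (A Y) Z W - T X Y (A Z) W - T X Y Z (A W)

/-- The 4-form `S₀(X,Y,Z,W) = ⟪S(X,Y)Z, W⟫` associated with an endomorphism-valued 2-form. -/
def form4 (S : V → V → V → V) (X Y Z W : V) : ℝ := ⟪S X Y Z, W⟫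

/-- The 6-multilinear form `(R.S)(U,V,X,Y,Z,W) = (R(U,V).S₀)(X,Y,Z,W)`. -/
def dotRS (R S : V → V → V → V) (U Vv X Y Z W : V) : ℝ :=
  der4 (R U Vv) (form4 S) X Y Z W

set_option linter.unusedSectionVars false

lemma Jskew (J : V →ₗ[ℝ] V) (hJ2 : ∀ X : V, J (J X) = -X)
    (hJg : ∀ X Y : V, ⟪J X, J Y⟫ = ⟪X, Y⟫) (X Y : V) : ⟪X, J Y⟫ = -⟪J X, Y⟫ := by
  have h := hJg X (J Y); rw [hJ2, inner_neg_right] at h; linarith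

lemma projD_selfadj (D : Submodule ℝ V) (X Y : V) : ⟪X, projD D Y⟫ = ⟪projD D X, Y⟫ :=
  (Submodule.inner_starProjection_left_eq_right D X Y).symm

lemma projD_mem (D : Submodule ℝ V) (X : V) : projD D X ∈ D := (D.orthogonalProjectionOnto X).2

lemma projD_idem (D : Submodule ℝ V) (X : V) : projD D (projD D X) = projD D X :=
  Submodule.starProjection_eq_self_iff.2 (projD_mem D X)

lemma projD_J (J : V →ₗ[ℝ] V) (hJ2 : ∀ X : V, J (J X) = -X)
    (hJg : ∀ X Y : V, ⟪J X, J Y⟫ = ⟪X, Y⟫) (D : Submodule ℝ V)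
    (hJD : ∀ X ∈ D, J X ∈ D) (X : V) : projD D (J X) = J (projD D X) := by
  unfold projD
  apply Submodule.eq_starProjection_of_mem_of_inner_eq_zero
  · exact hJD _ (projD_mem D X)
  · intro w hw
    have h2 : ⟪J X - J (projD D X), w⟫ = ⟪J (X - projD D X), w⟫ := by
      rw [map_sub]
    have h3 : ⟪J (X - projD D X), J (J w)⟫ = ⟪X - projD D X, J w⟫ := hJg _ _
    have h4 : ⟪X - projD D X, J w⟫ = 0 :=
      Submodule.starProjection_inner_eq_zero X (J w) (hJD w hw)
    have h5 : ⟪J (X - projD D X), J (J w)⟫ = -⟪J (X - projD D X), w⟫ := by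
      rw [hJ2, inner_neg_right]
    show ⟪J X - J (projD D X), w⟫ = 0
    rw [h2]
    have := h3.symm.trans h5
    rw [h4] at this; linarith

lemma key (J : V →ₗ[ℝ] V) (hJ2 : ∀ X : V, J (J X) = -X)
    (hJg : ∀ X Y : V, ⟪J X, J Y⟫ = ⟪X, Y⟫)
    (A : V → V) (hA : ∀ X Y : V, ⟪A X, Y⟫ = -⟪X, A Y⟫)
    (hAJ : ∀ X : V, J (A X) = A (J X)) (X Y Z W : V) :
    der4 A (form4 (PiT J)) X Y Z W = 0 := by
  simp only [der4, form4, PiT, inner_smul_left, inner_add_left, inner_sub_left,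
    inner_smul_right, map_smul, map_add, map_sub, RCLike.ofReal_real_eq_id, id_eq,
    conj_trivial, hAJ, hA]
  ring

lemma projD_neg (D : Submodule ℝ V) (X : V) : projD D (-X) = -projD D X := by
  simp [projD]

lemma projD_add (D : Submodule ℝ V) (X Y : V) : projD D (X + Y) = projD D X + projD D Y := by
  simp [projD]

lemma projD_sub (D : Submodule ℝ V) (X Y : V) : projD D (X - Y) = projD D X - projD D Y := by
  simp [projD]

lemma projD_smul (D : Submodule ℝ V) (r : ℝ) (X : V) : projD D (r • X) = r • projD D X := by
  simp [projD]

section TJ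
variable (J : V →ₗ[ℝ] V) (hJ2 : ∀ X : V, J (J X) = -X)
    (hJg : ∀ X Y : V, ⟪J X, J Y⟫ = ⟪X, Y⟫) (D : Submodule ℝ V)
    (hJD : ∀ X ∈ D, J X ∈ D)
include hJ2 hJg

lemma PiT_J (U Vv W : V) : J (PiT J U Vv W) = PiT J U Vv (J W) := by
  simp only [PiT, map_smul, map_add, map_sub, hJ2, hJg, Jskew J hJ2 hJg,
    inner_neg_left, inner_neg_right, neg_neg, neg_smul, smul_neg]
  abel

include hJD in
lemma PhiT_J (U Vv W : V) : J (PhiT J D U Vv W) = PhiT J D U Vv (J W) := by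
  simp only [PhiT, hForm, omForm, map_smul, map_add, map_sub, hJ2, hJg,
    projD_J J hJ2 hJg D hJD, Jskew J hJ2 hJg, projD_selfadj, projD_idem, projD_neg, projD_smul,
    inner_neg_left, inner_neg_right, map_neg, neg_neg, neg_smul, smul_neg]
  abel

include hJD in
lemma PsiT_J (U Vv W : V) : J (PsiT J D U Vv W) = PsiT J D U Vv (J W) := by
  simp only [PsiT, map_smul, map_neg, neg_smul, smul_neg, projD_J J hJ2 hJg D hJD]

lemma Jinner_anti (P Q : V) : ⟪J P, Q⟫ + ⟪J Q, P⟫ = 0 := by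
  have h := Jskew J hJ2 hJg Q P
  have c := real_inner_comm (J P) Q
  linarith

lemma PiT_skew (U Vv Z W : V) : ⟪PiT J U Vv Z, W⟫ + ⟪PiT J U Vv W, Z⟫ = 0 := by
  simp only [PiT, inner_smul_left, inner_add_left, inner_sub_left, inner_neg_left,
    conj_trivial]
  linear_combination (-(1/2) : ℝ) * ⟪J U, Vv⟫ * Jinner_anti J hJ2 hJg Z W

include hJD in
lemma pJ_anti (P Q : V) : ⟪projD D (J P), Q⟫ + ⟪projD D (J Q), P⟫ = 0 := by
  have h1 : ⟪projD D (J P), Q⟫ = ⟪J P, projD D Q⟫ := by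
    rw [projD_selfadj]
  have h2 : ⟪J P, projD D Q⟫ = -⟪J (projD D Q), P⟫ := by
    have := Jinner_anti J hJ2 hJg P (projD D Q); linarith
  rw [h1, h2, projD_J J hJ2 hJg D hJD]
  ring

include hJD in
lemma PhiT_skew (U Vv Z W : V) : ⟪PhiT J D U Vv Z, W⟫ + ⟪PhiT J D U Vv W, Z⟫ = 0 := by
  simp only [PhiT, hForm, omForm, inner_smul_left, inner_add_left, inner_sub_left,
    inner_neg_left, conj_trivial, projD_selfadj, projD_idem]
  linear_combination (-(1/4) : ℝ) * ⟪J U, Vv⟫ * pJ_anti J hJ2 hJg D hJD Z W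
    + (-(1/4) : ℝ) * ⟪projD D (J U), Vv⟫ * Jinner_anti J hJ2 hJg Z W

include hJD in
lemma PsiT_skew (U Vv Z W : V) : ⟪PsiT J D U Vv Z, W⟫ + ⟪PsiT J D U Vv W, Z⟫ = 0 := by
  simp only [PsiT, hForm, omForm, inner_smul_left, inner_neg_left, conj_trivial,
    projD_selfadj, projD_idem]
  have h : ⟪J (projD D Z), W⟫ + ⟪J (projD D W), Z⟫ = 0 := by
    have := pJ_anti J hJ2 hJg D hJD Z W
    rw [projD_J J hJ2 hJg D hJD, projD_J J hJ2 hJg D hJD] at this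
    exact this
  linear_combination (-⟪projD D (J U), Vv⟫) * h
end TJ

theorem stmt_15 {V : Type*} [NormedAddCommGroup V] [InnerProductSpace ℝ V]
    [FiniteDimensional ℝ V]
    (J : V →ₗ[ℝ] V) (hJ2 : ∀ X : V, J (J X) = -X)
    (hJg : ∀ X Y : V, ⟪J X, J Y⟫ = ⟪X, Y⟫)
    (D : Submodule ℝ V) (hD2 : Module.finrank ℝ ↥D = 2)
    (hJD : ∀ X ∈ D, J X ∈ D) :
    ∀ a b c : ℝ, ∀ U Vv X Y Z W : V,
      dotRS (fun P Q W0 => a • PiT J P Q W0 + b • PhiT J D P Q W0 + c • PsiT J D P Q W0)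
        (PiT J) U Vv X Y Z W = 0 := by
  intro a b c U Vv X Y Z W
  set A : V → V := fun W0 => a • PiT J U Vv W0 + b • PhiT J D U Vv W0 + c • PsiT J D U Vv W0
    with hAdef
  have hA : ∀ P Q : V, ⟪A P, Q⟫ = -⟪P, A Q⟫ := by
    intro P Q
    have hsum : ⟪A P, Q⟫ + ⟪A Q, P⟫ = 0 := by
      simp only [hAdef, inner_add_left, real_inner_smul_left]
      linear_combination a * PiT_skew J hJ2 hJg U Vv P Q
        + b * PhiT_skew J hJ2 hJg D hJD U Vv P Q
        + c * PsiT_skew J hJ2 hJg D hJD U Vv P Q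
    have hc : ⟪P, A Q⟫ = ⟪A Q, P⟫ := real_inner_comm (A Q) P
    linarith
  have hAJ : ∀ P : V, J (A P) = A (J P) := by
    intro P
    simp only [hAdef, map_add, map_smul, PiT_J J hJ2 hJg, PhiT_J J hJ2 hJg D hJD,
      PsiT_J J hJ2 hJg D hJD]
  exact key J hJ2 hJg A hA hAJ X Y Z W
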